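/- Let α, β, θ, γ > 0 with α > β, and let x₀ < 0. Set t₁ = γ^{−1} log((α − β − γx₀)/(α − β)) (which is positive and finite). Then the function x defined by x(t) = (x₀ − (α − β)/γ)·e^{−γt} + (α − β)/γ for t ∈ [0, t₁] and x(t) = ((α − β)/θ)·(1 − e^{−θ(t − t₁)}) for t ≥ t₁ is continuous, satisfies x(t₁) = 0 with x(t) < 0 for t < t₁, and solves the fluid equation x(t) = x₀ + (α − β)t − θ∫₀ᵗ x⁺(s) ds + γ∫₀ᵗ x⁻(s) ds for all t ≥ 0. -/

import Mathlib

/-- `x : ℝ → ℝ`, viewed as a function on `[0,∞)`, is a continuous solution of the fluid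
equation `x(t) = x₀ + (α - β)t - θ∫₀ᵗ x⁺(s) ds + γ∫₀ᵗ x⁻(s) ds` for `t ≥ 0`. -/
def IsFluidSolution (α β θ γ x₀ : ℝ) (x : ℝ → ℝ) : Prop :=
  ContinuousOn x (Set.Ici 0) ∧
    ∀ t : ℝ, 0 ≤ t →
      x t = x₀ + (α - β) * t - θ * (∫ s in (0:ℝ)..t, max (x s) 0)
        + γ * (∫ s in (0:ℝ)..t, max (-x s) 0)

lemma int_aff_exp (b C D u v : ℝ) (hb : b ≠ 0) :
    ∫ s in u..v, (C * Real.exp (b * (s - u)) + D)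
      = C * (Real.exp (b * (v - u)) - 1) / b + D * (v - u) := by
  have key : ∀ s ∈ Set.uIcc u v,
      HasDerivAt (fun s => C * Real.exp (b * (s - u)) / b + D * s)
        (C * Real.exp (b * (s - u)) + D) s := by
    intro s _
    have h1 : HasDerivAt (fun s : ℝ => b * (s - u)) b s := by
      simpa using ((hasDerivAt_id s).sub_const u).const_mul b
    have h2 := ((h1.exp.const_mul C).div_const b).add ((hasDerivAt_id s).const_mul D)
    have h3 : C * (Real.exp (b * (s - u)) * b) / b + D * 1
        = C * Real.exp (b * (s - u)) + D := by field_simp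
    exact h3 ▸ h2
  have hint : IntervalIntegrable (fun s => C * Real.exp (b * (s - u)) + D)
      MeasureTheory.volume u v := (Continuous.intervalIntegrable (by fun_prop)) u v
  rw [intervalIntegral.integral_eq_sub_of_hasDerivAt key hint]
  simp only [sub_self, mul_zero, Real.exp_zero]
  ring


/-- For `α > β` and `x₀ < 0`, with
`t₁ = γ⁻¹ log((α - β - γx₀)/(α - β)) > 0`, the piecewise function
`x(t) = (x₀ - (α - β)/γ)·e^{-γt} + (α - β)/γ` on `[0, t₁]` and
`x(t) = ((α - β)/θ)·(1 - e^{-θ(t - t₁)})` for `t ≥ t₁` is continuous, vanishes at `t₁`,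
is negative on `[0, t₁)`, and solves the fluid equation. -/
theorem stmt_8 (α β θ γ x₀ t₁ : ℝ) (hα : 0 < α) (hβ : 0 < β) (hθ : 0 < θ) (hγ : 0 < γ)
    (hβα : β < α) (hx₀ : x₀ < 0)
    (ht₁ : t₁ = γ⁻¹ * Real.log ((α - β - γ * x₀) / (α - β)))
    (x : ℝ → ℝ)
    (hx : ∀ t : ℝ, x t =
      if t ≤ t₁ then (x₀ - (α - β) / γ) * Real.exp (-(γ * t)) + (α - β) / γ
      else (α - β) / θ * (1 - Real.exp (-(θ * (t - t₁))))) :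
    0 < t₁ ∧ ContinuousOn x (Set.Ici 0) ∧ x t₁ = 0 ∧
      (∀ t : ℝ, 0 ≤ t → t < t₁ → x t < 0) ∧ IsFluidSolution α β θ γ x₀ x := by
  have ha : 0 < α - β := by linarith
  have hγ' : γ ≠ 0 := ne_of_gt hγ
  have hθ' : θ ≠ 0 := ne_of_gt hθ
  have hγx : 0 < -(γ * x₀) := by nlinarith
  have hd : 0 < α - β - γ * x₀ := by nlinarith
  have hd' : α - β - γ * x₀ ≠ 0 := ne_of_gt hd
  have hr : 1 < (α - β - γ * x₀) / (α - β) := by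
    rw [lt_div_iff₀ ha]; nlinarith
  have ht₁pos : 0 < t₁ := by
    rw [ht₁]; exact mul_pos (inv_pos.2 hγ) (Real.log_pos hr)
  have E : Real.exp (-(γ * t₁)) = (α - β) / (α - β - γ * x₀) := by
    have h1 : γ * t₁ = Real.log ((α - β - γ * x₀) / (α - β)) := by
      rw [ht₁]; field_simp
    rw [Real.exp_neg, h1, Real.exp_log (by positivity), inv_div]
  have hxt₁ : x t₁ = 0 := by
    rw [hx t₁, if_pos le_rfl, E]
    have hd'' : α - β - x₀ * γ ≠ 0 := by rwa [mul_comm]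
    field_simp
    ring
  have h0 : (x₀ - (α - β) / γ) * Real.exp (-(γ * t₁)) + (α - β) / γ = 0 := by
    rw [← hxt₁, hx t₁, if_pos le_rfl]
  have hA : x₀ - (α - β) / γ < 0 := by
    have : 0 < (α - β) / γ := by positivity
    linarith
  have hle : ∀ s : ℝ, s ≤ t₁ → x s ≤ 0 := by
    intro s hs
    rw [hx s, if_pos hs]
    have hE : Real.exp (-(γ * t₁)) ≤ Real.exp (-(γ * s)) :=
      Real.exp_le_exp.2 (by nlinarith)
    nlinarith
  have hneg : ∀ t : ℝ, 0 ≤ t → t < t₁ → x t < 0 := by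
    intro t _ hlt
    rw [hx t, if_pos (le_of_lt hlt)]
    have hE : Real.exp (-(γ * t₁)) < Real.exp (-(γ * t)) :=
      Real.exp_lt_exp.2 (by nlinarith)
    nlinarith
  have hge : ∀ s : ℝ, t₁ ≤ s → 0 ≤ x s := by
    intro s hs
    rcases eq_or_lt_of_le hs with h | h
    · rw [← h, hxt₁]
    · rw [hx s, if_neg (not_le.2 h)]
      have hE : Real.exp (-(θ * (s - t₁))) ≤ 1 := by
        rw [Real.exp_le_one_iff]; nlinarith
      apply mul_nonneg (by positivity)
      linarith
  have hcont : Continuous x := by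
    have hxfun : x = fun t => if t ≤ t₁
        then (x₀ - (α - β) / γ) * Real.exp (-(γ * t)) + (α - β) / γ
        else (α - β) / θ * (1 - Real.exp (-(θ * (t - t₁)))) := funext hx
    rw [hxfun]
    apply Continuous.if_le (by fun_prop) (by fun_prop) continuous_id continuous_const
    intro a haeq
    simp only [id] at haeq
    subst haeq
    rw [h0]
    simp
  -- the key integral computations
  have I1gen : ∀ u : ℝ, 0 ≤ u → u ≤ t₁ → (∫ s in (0:ℝ)..u, max (x s) 0) = 0 := by
    intro u hu hut
    have hEq : Set.EqOn (fun s => max (x s) 0) (fun _ => (0:ℝ)) (Set.uIcc 0 u) := by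
      intro s hs
      rw [Set.uIcc_of_le hu] at hs
      exact max_eq_right (hle s (le_trans hs.2 hut))
    rw [intervalIntegral.integral_congr hEq, intervalIntegral.integral_zero]
  have I2gen : ∀ u : ℝ, 0 ≤ u → u ≤ t₁ → (∫ s in (0:ℝ)..u, max (-x s) 0)
      = ((α - β) / γ - x₀) * (Real.exp (-γ * (u - 0)) - 1) / (-γ)
        + (-((α - β) / γ)) * (u - 0) := by
    intro u hu hut
    have hEq : Set.EqOn (fun s => max (-x s) 0)
        (fun s => ((α - β) / γ - x₀) * Real.exp (-γ * (s - 0)) + (-((α - β) / γ)))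
        (Set.uIcc 0 u) := by
      intro s hs
      rw [Set.uIcc_of_le hu] at hs
      have hs1 : s ≤ t₁ := le_trans hs.2 hut
      have hsle := hle s hs1
      rw [hx s, if_pos hs1] at hsle
      simp only
      rw [hx s, if_pos hs1, max_eq_left (by linarith),
        show -γ * (s - 0) = -(γ * s) by ring]
      ring
    rw [intervalIntegral.integral_congr hEq]
    exact int_aff_exp (-γ) _ _ 0 u (neg_ne_zero.2 hγ')
  refine ⟨ht₁pos, hcont.continuousOn, hxt₁, hneg, hcont.continuousOn, ?_⟩
  intro t ht
  by_cases hcase : t ≤ t₁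
  · rw [hx t, if_pos hcase, I1gen t ht hcase, I2gen t ht hcase]
    field_simp
    ring
  · have hlt : t₁ < t := not_le.1 hcase
    have hix : Continuous fun s => max (x s) 0 := hcont.max continuous_const
    have hix' : Continuous fun s => max (-x s) 0 := hcont.neg.max continuous_const
    have split1 : (∫ s in (0:ℝ)..t, max (x s) 0)
        = (∫ s in (0:ℝ)..t₁, max (x s) 0) + ∫ s in t₁..t, max (x s) 0 :=
      (intervalIntegral.integral_add_adjacent_intervals
        (hix.intervalIntegrable 0 t₁) (hix.intervalIntegrable t₁ t)).symm
    have split2 : (∫ s in (0:ℝ)..t, max (-x s) 0)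
        = (∫ s in (0:ℝ)..t₁, max (-x s) 0) + ∫ s in t₁..t, max (-x s) 0 :=
      (intervalIntegral.integral_add_adjacent_intervals
        (hix'.intervalIntegrable 0 t₁) (hix'.intervalIntegrable t₁ t)).symm
    have J2 : (∫ s in t₁..t, max (x s) 0)
        = (-((α - β) / θ)) * (Real.exp (-θ * (t - t₁)) - 1) / (-θ)
          + ((α - β) / θ) * (t - t₁) := by
      have hEq : Set.EqOn (fun s => max (x s) 0)
          (fun s => (-((α - β) / θ)) * Real.exp (-θ * (s - t₁)) + (α - β) / θ)
          (Set.uIcc t₁ t) := by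
        intro s hs
        rw [Set.uIcc_of_le (le_of_lt hlt)] at hs
        simp only
        rw [max_eq_left (hge s hs.1)]
        rcases eq_or_lt_of_le hs.1 with h | h
        · rw [← h, hxt₁]
          simp
        · rw [hx s, if_neg (not_le.2 h), show -θ * (s - t₁) = -(θ * (s - t₁)) by ring]
          ring
      rw [intervalIntegral.integral_congr hEq]
      exact int_aff_exp (-θ) _ _ t₁ t (neg_ne_zero.2 hθ')
    have J3 : (∫ s in t₁..t, max (-x s) 0) = 0 := by
      have hEq : Set.EqOn (fun s => max (-x s) 0) (fun _ => (0:ℝ)) (Set.uIcc t₁ t) := by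
        intro s hs
        rw [Set.uIcc_of_le (le_of_lt hlt)] at hs
        exact max_eq_right (by simpa using hge s hs.1)
      rw [intervalIntegral.integral_congr hEq, intervalIntegral.integral_zero]
    rw [hx t, if_neg hcase, split1, split2, J2, J3,
      I1gen t₁ (le_of_lt ht₁pos) le_rfl, I2gen t₁ (le_of_lt ht₁pos) le_rfl,
      show -γ * (t₁ - (0:ℝ)) = -(γ * t₁) by ring, E]
    have hd'' : α - β - x₀ * γ ≠ 0 := by rwa [mul_comm]
    field_simp
    ring
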